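/- Let G be a countable group, X a topological space with an action of G by homeomorphisms, N ∈ ℕ, and F a family of subgroups of G closed under supergroups of finite index. Assume there exists a flow space FS for G satisfying: (A) for every finite subset S ⊆ G there is α > 0 such that for every δ > 0 there is a continuous map φ : X → FS with d_fol(φ(g·x), g·φ(x)) < (α,δ) for all x ∈ X and g ∈ S; and (B) for every α > 0 and ε > 0 there exist δ > 0 and a continuous G-equivariant map ψ : FS → Δ_F^(N)(G) such that for all c, c' ∈ FS, d_fol(c,c') < (α,δ) implies d(ψ(c), ψ(c')) < ε. Then the action of G on X is N-F-amenable; equivalently, for every finite subset S ⊆ G and every ε > 0 there is a continuous map f : X → Δ_F^(N)(G) with d(f(g·x), g·f(x)) < ε for all x ∈ X and g ∈ S. -/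

import Mathlib

open scoped Pointwise ENNReal
open Filter Topology

noncomputable section

namespace FJ

/-- The set of left cosets of members of a family `F` of subgroups of `G`. -/
def cosets {G : Type} [Group G] (F : Set (Subgroup G)) : Set (Set G) :=
  {A | ∃ (g : G) (H : Subgroup G), H ∈ F ∧ A = g • (H : Set G)}

/-- Left translation by `g` as a bijection of the set of cosets. -/
def cosetEquiv {G : Type} [Group G] (F : Set (Subgroup G)) (g : G) :
    ↥(cosets F) ≃ ↥(cosets F) where
  toFun A := ⟨g • (A : Set G), by
    obtain ⟨h, H, hH, hA⟩ := A.2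
    exact ⟨g * h, H, hH, by rw [hA, smul_smul]⟩⟩
  invFun A := ⟨g⁻¹ • (A : Set G), by
    obtain ⟨h, H, hH, hA⟩ := A.2
    exact ⟨g⁻¹ * h, H, hH, by rw [hA, smul_smul]⟩⟩
  left_inv A := Subtype.ext (inv_smul_smul g (A : Set G))
  right_inv A := Subtype.ext (smul_inv_smul g (A : Set G))

/-- Reindexing an `ℓ¹`-function along a bijection of the index set. -/
def lpT {ι : Type} (e : ι ≃ ι) (p : lp (fun _ : ι => ℝ) 1) : lp (fun _ : ι => ℝ) 1 :=
  ⟨fun i => p (e i), by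
    have h1 : Summable fun i : ι => ‖p i‖ ^ ((1 : ℝ≥0∞).toReal) :=
      (lp.memℓp p).summable (by norm_num)
    exact memℓp_gen (e.summable_iff.2 h1)⟩

@[simp] theorem lpT_apply {ι : Type} (e : ι ≃ ι) (p : lp (fun _ : ι => ℝ) 1) (i : ι) :
    lpT e p i = p (e i) := rfl

/-- The `N`-skeleton of the full simplex on the index set `ι`, inside `ℓ¹(ι)`:
finitely supported probability measures whose support has at most `N + 1` points. -/
def stdSimplex (ι : Type) (N : ℕ) : Set (lp (fun _ : ι => ℝ) 1) :=
  {p | (∀ i, 0 ≤ p i) ∧ {i | p i ≠ 0}.Finite ∧ {i | p i ≠ 0}.ncard ≤ N + 1 ∧ ∑' i, p i = 1}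

/-- Reindexing preserves the simplex. -/
def simT {ι : Type} {N : ℕ} (e : ι ≃ ι) (q : ↥(stdSimplex ι N)) : ↥(stdSimplex ι N) := by
  refine ⟨lpT e q.1, ?_, ?_, ?_, ?_⟩
  · exact fun i => q.2.1 (e i)
  · have : {i | (lpT e q.1) i ≠ 0} = e ⁻¹' {i | (q.1 : ∀ _ : ι, ℝ) i ≠ 0} := rfl
    rw [this]
    exact q.2.2.1.preimage e.injective.injOn
  · have h1 : {i | (lpT e q.1) i ≠ 0} = e.symm '' {i | (q.1 : ∀ _ : ι, ℝ) i ≠ 0} := by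
      rw [Equiv.image_eq_preimage_symm]; rfl
    rw [h1, Set.ncard_image_of_injective _ e.symm.injective]
    exact q.2.2.2.1
  · have := q.2.2.2.2
    calc ∑' i, (lpT e q.1) i = ∑' i, q.1 (e i) := rfl
    _ = ∑' i, q.1 i := e.tsum_eq _
    _ = 1 := this

/-- The isometric action of `G` on the simplex `Δ_F^{(N)}(G)`: `(g • p) A = p (g⁻¹ • A)`. -/
def simSMulF {G : Type} [Group G] (F : Set (Subgroup G)) (N : ℕ) (g : G) :
    ↥(stdSimplex ↥(cosets F) N) → ↥(stdSimplex ↥(cosets F) N) :=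
  simT (cosetEquiv F g⁻¹)

/-- The isometric action of `G` on the simplex `Δ^{(N)}(G)` by left translation:
`(g • p) h = p (g⁻¹ * h)`. -/
def simSMulG {G : Type} [Group G] (N : ℕ) (g : G) :
    ↥(stdSimplex G N) → ↥(stdSimplex G N) :=
  simT (Equiv.mulLeft g⁻¹)

end FJ

/-- A flow space for a group `G`: a metric space with an isometric `G`-action
and a (continuous) flow that commutes with the `G`-action. -/
structure FlowSpace (G : Type) [Group G] where
  carrier : Type
  [metric : MetricSpace carrier]
  smul : G → carrier → carrier
  smul_isometry : ∀ g : G, Isometry (smul g)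
  one_smul : ∀ c, smul 1 c = c
  mul_smul : ∀ g h c, smul (g * h) c = smul g (smul h c)
  flow : ℝ → carrier → carrier
  flow_continuous : Continuous (fun p : ℝ × carrier => flow p.1 p.2)
  flow_zero : ∀ c, flow 0 c = c
  flow_add : ∀ s t c, flow (s + t) c = flow s (flow t c)
  smul_flow : ∀ (g : G) (t : ℝ) (c : carrier), smul g (flow t c) = flow t (smul g c)

attribute [instance] FlowSpace.metric

/-- Lemma 3.3 of the paper: if there is a flow space `FS` for the countable group `G`
satisfying conditions (A) and (B) with respect to the `G`-space `X`, the family `F` and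
the dimension `N`, then the action of `G` on `X` is `N`-`F`-amenable, i.e. there is a
sequence of continuous, almost `G`-equivariant maps `X → Δ_F^{(N)}(G)`. -/
theorem flowspace_criterion_N_F_amenable
    {G : Type} [Group G] [Countable G]
    -- `F` is a family of subgroups of `G` ...
    (F : Set (Subgroup G)) (hFne : F.Nonempty)
    (hFconj : ∀ H ∈ F, ∀ g : G, (MulAut.conj g) • H ∈ F)
    (hFsub : ∀ H ∈ F, ∀ K : Subgroup G, K ≤ H → K ∈ F)
    -- ... closed under supergroups of finite index
    (hFfinidx : ∀ H ∈ F, ∀ K : Subgroup G, H ≤ K → H.relIndex K ≠ 0 → K ∈ F)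
    (N : ℕ)
    -- `X` is a topological space with an action of `G` by homeomorphisms
    {X : Type} [TopologicalSpace X] [MulAction G X]
    (hXcont : ∀ g : G, Continuous (fun x : X => g • x))
    -- there exists a flow space `FS` for `G` such that:
    (FS : FlowSpace G)
    -- (A): for every finite `S ⊆ G` there is `α > 0` such that for every `δ > 0` there
    -- is a continuous `φ : X → FS` with `d_fol(φ(g•x), g•φ(x)) < (α, δ)` for `x ∈ X`, `g ∈ S`
    (hA : ∀ S : Finset G, ∃ α > (0 : ℝ), ∀ δ > (0 : ℝ),
      ∃ φ : X → FS.carrier, Continuous φ ∧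
        ∀ (x : X), ∀ g ∈ S, ∃ t ∈ Set.Icc (-α) α,
          dist (FS.flow t (φ (g • x))) (FS.smul g (φ x)) < δ)
    -- (B): for every `α, ε > 0` there are `δ > 0` and a continuous `G`-equivariant
    -- `ψ : FS → Δ_F^{(N)}(G)` such that `d_fol(c, c') < (α, δ)` implies `d(ψ c, ψ c') < ε`
    (hB : ∀ α > (0 : ℝ), ∀ ε > (0 : ℝ), ∃ δ > (0 : ℝ),
      ∃ ψ : FS.carrier → ↥(FJ.stdSimplex ↥(FJ.cosets F) N), Continuous ψ ∧
        (∀ (g : G) (c : FS.carrier), ψ (FS.smul g c) = FJ.simSMulF F N g (ψ c)) ∧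
        ∀ c c' : FS.carrier, (∃ t ∈ Set.Icc (-α) α, dist (FS.flow t c) c' < δ) →
          dist (ψ c) (ψ c') < ε) :
    -- then the action of `G` on `X` is `N`-`F`-amenable: there is a sequence of
    -- continuous, almost `G`-equivariant maps `X → Δ_F^{(N)}(G)`
    ∃ f : ℕ → X → ↥(FJ.stdSimplex ↥(FJ.cosets F) N),
      (∀ n, Continuous (f n)) ∧
      ∀ g : G, ∀ ε > (0 : ℝ), ∃ n₀ : ℕ, ∀ n ≥ n₀, ∀ x : X,
        dist (f n (g • x)) (FJ.simSMulF F N g (f n x)) < ε := by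
  classical
  obtain ⟨e, he⟩ := exists_surjective_nat G
  have key : ∀ n : ℕ, ∃ f : X → ↥(FJ.stdSimplex ↥(FJ.cosets F) N),
      Continuous f ∧ ∀ x : X, ∀ m < n,
        dist (f (e m • x)) (FJ.simSMulF F N (e m) (f x)) < 1 / (n + 1) := by
    intro n
    obtain ⟨α, hα, hAs⟩ := hA ((Finset.range n).image e)
    obtain ⟨δ, hδ, ψ, hψc, hψeq, hψ⟩ := hB α hα (1 / (n + 1)) (by positivity)
    obtain ⟨φ, hφc, hφ⟩ := hAs δ hδ
    refine ⟨ψ ∘ φ, hψc.comp hφc, ?_⟩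
    intro x m hm
    have hg : e m ∈ (Finset.range n).image e :=
      Finset.mem_image.2 ⟨m, Finset.mem_range.2 hm, rfl⟩
    have h1 := hψ (φ (e m • x)) (FS.smul (e m) (φ x)) (hφ x _ hg)
    rwa [hψeq] at h1
  choose f hfc hf using key
  refine ⟨f, hfc, ?_⟩
  intro g ε hε
  obtain ⟨m, rfl⟩ := he g
  obtain ⟨k, hk⟩ := exists_nat_one_div_lt hε
  refine ⟨max (m + 1) k, fun n hn x => ?_⟩
  have h1 : m < n := lt_of_lt_of_le (Nat.lt_succ_self m) (le_trans (le_max_left _ _) hn)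
  have h2 := hf n x m h1
  have h3 : (1 : ℝ) / (n + 1) ≤ 1 / (k + 1) := by
    apply one_div_le_one_div_of_le (by positivity)
    have : (k : ℝ) ≤ n := Nat.cast_le.2 (le_trans (le_max_right _ _) hn)
    linarith
  exact h2.trans_le (h3.trans hk.le)
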